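/- If (X,E) is an expansive hyperbolic graph of bounded degree (sup_{x∈X} deg(x) < ∞), then its hyperbolic boundary (∂X, θ_a) is a doubling metric space. -/

import Mathlib

open SimpleGraph Metric
open scoped ENNReal ENat

noncomputable section

/-- A locally finite connected graph with a distinguished root. -/
structure RootedGraph (X : Type*) where
  G : SimpleGraph X
  root : X
  conn : G.Connected
  locFin : ∀ x : X, {y | G.Adj x y}.Finite

namespace RootedGraph

variable {X : Type*} (R : RootedGraph X)

/-- The level `|x| = d(ϑ,x)` of a vertex. -/
def level (x : X) : ℕ := R.G.dist R.root x

/-- The horizontal subgraph: edges joining vertices of equal level. -/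
def Gh : SimpleGraph X where
  Adj x y := R.G.Adj x y ∧ R.level x = R.level y
  symm := ⟨fun _ _ h => ⟨h.1.symm, h.2.symm⟩⟩
  loopless := ⟨fun _ h => R.G.irrefl h.1⟩

/-- The horizontal distance `d_h`, valued in `ℕ∞`. -/
def dh (x y : X) : ℕ∞ := R.Gh.edist x y

/-- The `m`-th descendant set `J_m(x)`: vertices `y` with `|y| = |x| + m` lying
below `x` (i.e. `x` lies on a geodesic from the root to `y`). -/
def J (m : ℕ) (x : X) : Set X :=
  {y | R.level y = R.level x + m ∧ R.G.dist x y = m}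

/-- `(m,k)`-departing property. -/
def Departing (m k : ℕ) : Prop :=
  ∀ x y : X, R.level x = R.level y → (k : ℕ∞) < R.dh x y →
    ∀ u ∈ R.J m x, ∀ v ∈ R.J m y, ((2 * k : ℕ) : ℕ∞) < R.dh u v

/-- Expansive property. -/
def Expansive : Prop :=
  ∀ x y : X, R.level x = R.level y → (1 : ℕ∞) < R.dh x y →
    ∀ u ∈ R.J 1 x, ∀ v ∈ R.J 1 y, (1 : ℕ∞) < R.dh u v

/-- The Gromov product `(x|y)` with base point the root. -/
def gp (x y : X) : ℝ := ((R.level x : ℝ) + R.level y - R.G.dist x y) / 2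

/-- Gromov hyperbolicity with respect to the root base point. -/
def Hyperbolic : Prop :=
  ∃ δ : ℝ, 0 ≤ δ ∧ ∀ x y z : X, min (R.gp x z) (R.gp z y) - δ ≤ R.gp x y

/-- A geodesic ray from the root. -/
def IsRay (f : ℕ → X) : Prop := f 0 = R.root ∧ ∀ i, f (i + 1) ∈ R.J 1 (f i)

/-- The Gromov product of two rays: the (increasing) limit of `(x_i|y_i)`. -/
def gpRay (f g : ℕ → X) : ℝ≥0∞ := ⨆ i, ENNReal.ofReal (R.gp (f i) (g i))

/-- `|x ∨ y|_k = sup{ i : d_h(x_i,y_i) ≤ k }`. -/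
def joinK (k : ℕ) (f g : ℕ → X) : ℝ≥0∞ :=
  ⨆ (i : ℕ) (_ : R.dh (f i) (g i) ≤ (k : ℕ∞)), (i : ℝ≥0∞)

/-- The Gromov product on a model `B` of the hyperbolic boundary, defined as the
supremum over pairs of converging rays. -/
def gpB {B : Type*} (lim : (ℕ → X) → B) (ξ η : B) : ℝ≥0∞ :=
  ⨆ (f : ℕ → X) (g : ℕ → X)
    (_ : R.IsRay f ∧ R.IsRay g ∧ lim f = ξ ∧ lim g = η), R.gpRay f g

/-- `B` together with `lim` is a model of the hyperbolic boundary: every point is the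
limit of a ray, and two rays have the same limit iff they are equivalent. -/
def BoundaryOf {B : Type*} (lim : (ℕ → X) → B) : Prop :=
  (∀ ξ : B, ∃ f, R.IsRay f ∧ lim f = ξ) ∧
    ∀ f g, R.IsRay f → R.IsRay g → (lim f = lim g ↔ R.gpRay f g = ⊤)

/-- The metric on the boundary model is a Gromov metric:
`θ_a(ξ,η) ≍ e^{-a(ξ|η)}`. -/
def GromovLike {B : Type*} [MetricSpace B] (lim : (ℕ → X) → B) (a c₁ c₂ : ℝ) : Prop :=
  ∀ ξ η : B, ξ ≠ η →
    c₁ * Real.exp (-a * (R.gpB lim ξ η).toReal) ≤ dist ξ η ∧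
      dist ξ η ≤ c₂ * Real.exp (-a * (R.gpB lim ξ η).toReal)

/-- The boundary cell `J_∂(x)`: boundary points reachable by rays through `x`. -/
def cell {B : Type*} (lim : (ℕ → X) → B) (x : X) : Set B :=
  {ξ | ∃ f, R.IsRay f ∧ f (R.level x) = x ∧ lim f = ξ}

/-- The `k`-shadow `J^k_∂(x)`. -/
def shadow {B : Type*} (lim : (ℕ → X) → B) (k : ℕ) (x : X) : Set B :=
  ⋃ y ∈ {y | R.level y = R.level x ∧ R.dh x y ≤ (k : ℕ∞)}, R.cell lim y

/-- Bounded degree. -/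
def BddDeg : Prop := ∃ D : ℕ, ∀ x : X, Set.ncard {y | R.G.Adj x y} ≤ D

/-- A vertical rooted graph: all edges join adjacent levels. -/
def Vertical : Prop :=
  ∀ x y : X, R.G.Adj x y → R.level x = R.level y + 1 ∨ R.level y = R.level x + 1

/-- An index map on `(X,E_v)` over `M`. -/
def IsIndexMap {M : Type*} [MetricSpace M] (Φ : X → Set M) : Prop :=
  (∀ x, IsCompact (Φ x)) ∧ (∀ x, (Φ x).Nonempty) ∧
    (∀ x y, y ∈ R.J 1 x → Φ y ⊆ Φ x) ∧
    (∀ f, R.IsRay f → ∃ p, (⋂ i, Φ (f i)) = {p})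

/-- The attractor of an index map. -/
def attractor {M : Type*} [MetricSpace M] (Φ : X → Set M) : Set M :=
  ⋂ n : ℕ, ⋃ x ∈ {x | R.level x = n}, Φ x

/-- Exponential type-(b): `diam Φ(x) ≤ δ₀ e^{-b|x|}`. -/
def ExpType {M : Type*} [MetricSpace M] (Φ : X → Set M) (b δ₀ : ℝ) : Prop :=
  ∀ x, EMetric.diam (Φ x) ≤ ENNReal.ofReal (δ₀ * Real.exp (-b * R.level x))

/-- Condition `(S_b)`. -/
def CondS {M : Type*} [MetricSpace M] (Φ : X → Set M) (b : ℝ) : Prop :=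
  ∀ c : ℝ, 0 < c → ∃ ℓ : ℕ, ∀ (n : ℕ) (F : Set M),
    EMetric.diam F < ENNReal.ofReal (c * Real.exp (-b * n)) →
      Set.ncard {x | R.level x = n ∧ ((Φ x ∩ R.attractor Φ) ∩ F).Nonempty} ≤ ℓ

end RootedGraph

/-- Distance between two subsets of a metric space. -/
def setDist {M : Type*} [MetricSpace M] (s t : Set M) : ℝ :=
  sInf ((fun p : M × M => dist p.1 p.2) '' s ×ˢ t)

/-- The AI_b-graph on `X` associated to an index map `Φ`:
same root, same vertical edges, and horizontal edges between distinct equal-level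
vertices whose index sets are `γe^{-bn}`-close. -/
def RootedGraph.IsAIb {X M : Type*} [MetricSpace M] (R R' : RootedGraph X)
    (Φ : X → Set M) (b γ : ℝ) : Prop :=
  R'.root = R.root ∧ ∀ x y : X, R'.G.Adj x y ↔
    (R.G.Adj x y ∨ (R.level x = R.level y ∧ x ≠ y ∧
      setDist (Φ x) (Φ y) ≤ γ * Real.exp (-b * R.level x)))

/-- The AI_∞-graph on `X` associated to an index map `Φ`. -/
def RootedGraph.IsAIinf {X M : Type*} [MetricSpace M] (R R' : RootedGraph X)
    (Φ : X → Set M) : Prop :=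
  R'.root = R.root ∧ ∀ x y : X, R'.G.Adj x y ↔
    (R.G.Adj x y ∨ (R.level x = R.level y ∧ x ≠ y ∧ (Φ x ∩ Φ y).Nonempty))

end


noncomputable section

namespace RootedGraph

variable {X : Type*} {R : RootedGraph X}

lemma tri (x y z : X) : R.G.dist x z ≤ R.G.dist x y + R.G.dist y z :=
  R.conn.dist_triangle

lemma level_le (x y : X) : R.level y ≤ R.level x + R.G.dist x y := tri _ _ _

lemma dist_le_levels (x y : X) : R.G.dist x y ≤ R.level x + R.level y := by
  have := tri (R := R) x R.root y
  rwa [SimpleGraph.dist_comm (u := x) (v := R.root)] at this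

lemma gp_nonneg (x y : X) : 0 ≤ R.gp x y := by
  have := dist_le_levels (R := R) x y
  have : (R.G.dist x y : ℝ) ≤ (R.level x : ℝ) + R.level y := by exact_mod_cast this
  unfold gp; linarith

lemma gp_le_right (x y : X) : R.gp x y ≤ R.level y := by
  have := level_le (R := R) y x
  rw [SimpleGraph.dist_comm (u := y) (v := x)] at this
  have : (R.level x : ℝ) ≤ (R.level y : ℝ) + R.G.dist x y := by exact_mod_cast this
  unfold gp; linarith

lemma gp_comm (x y : X) : R.gp x y = R.gp y x := by
  unfold gp; rw [SimpleGraph.dist_comm, add_comm (R.level x : ℝ)]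

lemma gp_self (x : X) : R.gp x x = R.level x := by
  unfold gp; rw [SimpleGraph.dist_self]
  push_cast; ring

lemma IsRay.level_eq {f : ℕ → X} (hf : R.IsRay f) : ∀ i, R.level (f i) = i := by
  intro i
  induction i with
  | zero => rw [hf.1]; unfold level; exact SimpleGraph.dist_self
  | succ n ih => have := (hf.2 n).1; rw [this, ih]

lemma IsRay.dist_eq {f : ℕ → X} (hf : R.IsRay f) {i j : ℕ} (h : i ≤ j) :
    R.G.dist (f i) (f j) = j - i := by
  have hub : ∀ i j : ℕ, i ≤ j → R.G.dist (f i) (f j) ≤ j - i := by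
    intro i j h
    induction j with
    | zero => have : i = 0 := by omega
              subst this; simp
    | succ n ih =>
      rcases Nat.eq_or_lt_of_le h with h' | h'
      · subst h'; simp
      · have h1 : R.G.dist (f i) (f (n+1)) ≤ R.G.dist (f i) (f n) + R.G.dist (f n) (f (n+1)) :=
          tri _ _ _
        have h2 := (hf.2 n).2
        have h3 := ih (Nat.lt_succ_iff.mp h')
        omega
  have hlb : j ≤ i + R.G.dist (f i) (f j) := by
    have := level_le (R := R) (f i) (f j)
    rwa [hf.level_eq, hf.level_eq] at this
  have := hub i j h
  omega

lemma IsRay.gp_eq {f : ℕ → X} (hf : R.IsRay f) (i j : ℕ) :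
    R.gp (f i) (f j) = min (i : ℝ) (j : ℝ) := by
  rcases le_total i j with h | h
  · unfold gp
    rw [hf.dist_eq h, hf.level_eq, hf.level_eq]
    rw [min_eq_left (by exact_mod_cast h)]
    rw [Nat.cast_sub h]; ring
  · rw [gp_comm]
    unfold gp
    rw [hf.dist_eq h, hf.level_eq, hf.level_eq]
    rw [min_eq_right (by exact_mod_cast h)]
    rw [Nat.cast_sub h]; ring

/-- Key lemma 1: products along two rays. -/
lemma key1 {δ : ℝ} (hδ0 : 0 ≤ δ)
    (hδ : ∀ x y z : X, min (R.gp x z) (R.gp z y) - δ ≤ R.gp x y) {p q : ℕ → X}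
    (hp : R.IsRay p) (hq : R.IsRay q) {t : ℝ} {i : ℕ}
    (ht : t ≤ R.gp (p i) (q i)) (n : ℕ) :
    min t (n : ℝ) - 2 * δ ≤ R.gp (p n) (q n) := by
  have hi : t ≤ (i : ℝ) := le_trans ht (by
    have := gp_le_right (R := R) (p i) (q i); rwa [hq.level_eq] at this)
  have h1 := hδ (p n) (q i) (p i)
  have h2 := hδ (p n) (q n) (q i)
  rw [hp.gp_eq n i] at h1
  rw [hq.gp_eq i n] at h2
  have h3 : min t (n : ℝ) ≤ min (min (n : ℝ) (i : ℝ)) (R.gp (p i) (q i)) := by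
    refine le_min (le_min (min_le_right _ _) (le_trans (min_le_left _ _) hi)) ?_
    exact le_trans (min_le_left _ _) ht
  have h4 : min t (n : ℝ) - δ ≤ min (R.gp (p n) (q i)) (min (i : ℝ) (n : ℝ)) := by
    refine le_min (by linarith) ?_
    have : min t (n : ℝ) ≤ min (i : ℝ) (n : ℝ) :=
      le_min (le_trans (min_le_left _ _) hi) (min_le_right _ _)
    linarith
  linarith

/-- Extract large products from `gpRay = ⊤`. -/
lemma gpRay_top_exists {f g : ℕ → X} (h : R.gpRay f g = ⊤) (s : ℝ) :
    ∃ j, s ≤ R.gp (f j) (g j) := by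
  by_contra hc
  push_neg at hc
  have : R.gpRay f g ≤ ENNReal.ofReal s := by
    refine iSup_le fun j => ENNReal.ofReal_le_ofReal (hc j).le
  rw [h] at this
  exact (ENNReal.ofReal_ne_top (r := s)) (top_le_iff.mp this)

lemma gpRay_eq_top_of_forall {f g : ℕ → X} (h : ∀ s : ℝ, ∃ j, s ≤ R.gp (f j) (g j)) :
    R.gpRay f g = ⊤ := by
  by_contra hc
  obtain ⟨j, hj⟩ := h ((R.gpRay f g).toReal + 1)
  have h1 : ENNReal.ofReal (R.gp (f j) (g j)) ≤ R.gpRay f g :=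
    le_iSup (fun i => ENNReal.ofReal (R.gp (f i) (g i))) j
  have h2 : R.gp (f j) (g j) ≤ (R.gpRay f g).toReal := by
    rw [← ENNReal.ofReal_le_iff_le_toReal hc]
    exact h1
  linarith

lemma IsRay.gpRay_self {f : ℕ → X} (hf : R.IsRay f) : R.gpRay f f = ⊤ := by
  apply gpRay_eq_top_of_forall
  intro s
  refine ⟨⌈s⌉₊, ?_⟩
  rw [hf.gp_eq, min_self]
  exact Nat.le_ceil s

/-- Key lemma 2: transfer the product between pairs of equivalent rays. -/
lemma key2 {δ : ℝ} (hδ0 : 0 ≤ δ)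
    (hδ : ∀ x y z : X, min (R.gp x z) (R.gp z y) - δ ≤ R.gp x y) {f f' g g' : ℕ → X}
    (hf : R.IsRay f) (hf' : R.IsRay f')
    (hg : R.IsRay g) (hg' : R.IsRay g')
    (hff' : R.gpRay f f' = ⊤) (hgg' : R.gpRay g g' = ⊤)
    {t : ℝ} {i : ℕ} (ht : t ≤ R.gp (f' i) (g' i)) (n : ℕ) :
    min t (n : ℝ) - 4 * δ ≤ R.gp (f n) (g n) := by
  obtain ⟨j, hj⟩ := gpRay_top_exists hff' (n : ℝ)
  obtain ⟨k, hk⟩ := gpRay_top_exists hgg' (n : ℝ)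
  have ha : (n : ℝ) - 2 * δ ≤ R.gp (f n) (f' n) := by
    have := key1 hδ0 hδ hf hf' hj n; rwa [min_self] at this
  have hb : min t (n : ℝ) - 2 * δ ≤ R.gp (f' n) (g' n) := key1 hδ0 hδ hf' hg' ht n
  have hcg : (n : ℝ) - 2 * δ ≤ R.gp (g' n) (g n) := by
    have := key1 hδ0 hδ hg hg' hk n; rwa [min_self, gp_comm] at this
  have h1 := hδ (f n) (g' n) (f' n)
  have h2 := hδ (f n) (g n) (g' n)
  have hmn : min t (n : ℝ) ≤ (n : ℝ) := min_le_right _ _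
  have h3 : min t (n : ℝ) - 3 * δ ≤ min (R.gp (f n) (f' n)) (R.gp (f' n) (g' n)) - δ := by
    have := le_min (show min t (n:ℝ) - 2*δ ≤ R.gp (f n) (f' n) by linarith) hb
    linarith
  have h4 : min t (n : ℝ) - 4 * δ ≤ min (R.gp (f n) (g' n)) (R.gp (g' n) (g n)) - δ := by
    have := le_min (show min t (n:ℝ) - 3*δ ≤ R.gp (f n) (g' n) by linarith)
      (show min t (n:ℝ) - 3*δ ≤ R.gp (g' n) (g n) by linarith)
    linarith
  linarith

/-- Every vertex at positive distance admits a predecessor on a geodesic. -/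
lemma exists_adj_dist {x y : X} (h : 0 < R.G.dist x y) :
    ∃ z : X, R.G.Adj z y ∧ R.G.dist x z + 1 = R.G.dist x y := by
  obtain ⟨w, hw⟩ := R.conn.exists_walk_length_eq_dist x y
  have hlen : w.reverse.length = R.G.dist x y := by
    rw [SimpleGraph.Walk.length_reverse]; exact hw
  rcases hrev : w.reverse with _ | ⟨hadj, q⟩
  · rw [hrev] at hlen; simp only [SimpleGraph.Walk.length_nil] at hlen; omega
  · rename_i z
    rw [hrev] at hlen
    simp at hlen
    have h1 : R.G.dist x z ≤ q.length := by
      have := SimpleGraph.dist_le q.reverse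
      rwa [SimpleGraph.Walk.length_reverse] at this
    have h2 : R.G.dist x y ≤ R.G.dist x z + R.G.dist z y := R.conn.dist_triangle
    have h3 : R.G.dist z y ≤ 1 := by
      rw [SimpleGraph.dist_eq_one_iff_adj.mpr hadj.symm]
    exact ⟨z, hadj.symm, by omega⟩

/-- Every vertex of positive level has a parent. -/
lemma exists_parent {y : X} (h : 0 < R.level y) :
    ∃ z : X, R.level z + 1 = R.level y ∧ y ∈ R.J 1 z := by
  obtain ⟨z, hadj, hdz⟩ := exists_adj_dist (R := R) (x := R.root) (y := y) h
  have hzy : R.G.dist z y = 1 := SimpleGraph.dist_eq_one_iff_adj.mpr hadj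
  have hlz : R.level z + 1 = R.level y := hdz
  exact ⟨z, hlz, by omega, hzy⟩

/-- Geodesic prefix from the root to a given vertex. -/
lemma exists_prefix : ∀ (n : ℕ) (y : X), R.level y = n →
    ∃ p : ℕ → X, p 0 = R.root ∧ (∀ i, i < n → p (i + 1) ∈ R.J 1 (p i)) ∧ p n = y := by
  intro n
  induction n with
  | zero =>
    intro y hy
    have hyr : y = R.root :=
      ((R.conn.dist_eq_zero_iff (u := R.root) (v := y)).mp hy).symm
    exact ⟨fun _ => y, by rw [hyr], fun i hi => absurd hi (by omega), rfl⟩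
  | succ n ih =>
    intro y hy
    obtain ⟨z, hz1, hz2⟩ := exists_parent (R := R) (y := y) (by omega)
    obtain ⟨p, hp0, hpJ, hpn⟩ := ih z (by omega)
    refine ⟨fun i => if i ≤ n then p i else y, by simp [hp0], ?_, by simp⟩
    intro i hi
    rcases Nat.lt_or_ge i n with h' | h'
    · simp only [if_pos (by omega : i ≤ n), if_pos (by omega : i + 1 ≤ n)]
      exact hpJ i h'
    · have hin : i = n := by omega
      simp only [if_pos (by omega : i ≤ n), if_neg (by omega : ¬ i + 1 ≤ n)]
      rw [hin, hpn]
      exact hz2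

/-- Every vertex lies on a geodesic ray, provided every vertex has a child. -/
lemma exists_ray_through (hne : ∀ x : X, (R.J 1 x).Nonempty) (y : X) :
    ∃ f : ℕ → X, R.IsRay f ∧ f (R.level y) = y := by
  obtain ⟨p, hp0, hpJ, hpn⟩ := exists_prefix (R := R) (R.level y) y rfl
  set n := R.level y with hn
  let ext : ℕ → X := fun i => Nat.rec y (fun _ x => (hne x).some) i
  have hext : ∀ i, ext (i + 1) ∈ R.J 1 (ext i) := fun i => (hne (ext i)).some_mem
  refine ⟨fun i => if i ≤ n then p i else ext (i - n), ⟨by simp [hp0], ?_⟩, by simp [hpn]⟩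
  intro i
  rcases Nat.lt_or_ge i n with h' | h'
  · simp only [if_pos (by omega : i ≤ n), if_pos (by omega : i + 1 ≤ n)]
    exact hpJ i h'
  · rcases Nat.eq_or_lt_of_le h' with h'' | h''
    · simp only [if_pos (by omega : i ≤ n), if_neg (by omega : ¬ i + 1 ≤ n)]
      have h1 : i + 1 - n = 1 := by omega
      have h2 : p i = ext 0 := by rw [← h'', hpn]; rfl
      rw [h1, h2]
      exact hext 0
    · simp only [if_neg (by omega : ¬ i ≤ n), if_neg (by omega : ¬ i + 1 ≤ n)]
      have h1 : i + 1 - n = (i - n) + 1 := by omega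
      rw [h1]
      exact hext (i - n)

/-- Counting vertices in a ball under a degree bound. -/
lemma exists_ball_finset {D : ℕ} (hD : ∀ x : X, Set.ncard {y | R.G.Adj x y} ≤ D)
    (x₀ : X) : ∀ m : ℕ, ∃ s : Finset X,
      (∀ y, R.G.dist x₀ y ≤ m → y ∈ s) ∧ s.card ≤ (D + 1) ^ m := by
  classical
  intro m
  induction m with
  | zero =>
    refine ⟨{x₀}, fun y hy => ?_, by simp⟩
    have : y = x₀ := ((R.conn.dist_eq_zero_iff (u := x₀) (v := y)).mp (by omega)).symm
    simp [this]
  | succ m ih =>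
    obtain ⟨s, hs, hcard⟩ := ih
    refine ⟨s.biUnion (fun z => insert z (R.locFin z).toFinset), ?_, ?_⟩
    · intro y hy
      rcases Nat.lt_or_ge m (R.G.dist x₀ y) with h' | h'
      · obtain ⟨z, hadj, hdz⟩ := exists_adj_dist (R := R) (x := x₀) (y := y) (by omega)
        have hz : R.G.dist x₀ z ≤ m := by omega
        refine Finset.mem_biUnion.mpr ⟨z, hs z hz, ?_⟩
        refine Finset.mem_insert.mpr (Or.inr ?_)
        rw [Set.Finite.mem_toFinset]
        exact hadj
      · exact Finset.mem_biUnion.mpr ⟨y, hs y h', Finset.mem_insert_self _ _⟩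
    · refine le_trans Finset.card_biUnion_le ?_
      have hb : ∀ z ∈ s, (insert z (R.locFin z).toFinset).card ≤ D + 1 := by
        intro z _
        refine le_trans (Finset.card_insert_le _ _) ?_
        have h1 : (R.locFin z).toFinset.card = Set.ncard {y | R.G.Adj z y} :=
          (Set.ncard_eq_toFinset_card _ (R.locFin z)).symm
        have := hD z
        omega
      calc (∑ z ∈ s, (insert z (R.locFin z).toFinset).card)
          ≤ ∑ _z ∈ s, (D + 1) := Finset.sum_le_sum hb
        _ = s.card * (D + 1) := by simp [Finset.sum_const, mul_comm]
        _ ≤ (D + 1) ^ m * (D + 1) := Nat.mul_le_mul_right _ hcard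
        _ = (D + 1) ^ (m + 1) := by ring

lemma gpRay_le_gpB {B : Type*} {lim : (ℕ → X) → B} {f g : ℕ → X} {ξ η : B}
    (h : R.IsRay f ∧ R.IsRay g ∧ lim f = ξ ∧ lim g = η) :
    R.gpRay f g ≤ R.gpB lim ξ η := by
  refine le_trans ?_ (le_iSup _ f)
  refine le_trans ?_ (le_iSup _ g)
  exact le_iSup (fun _ : R.IsRay f ∧ R.IsRay g ∧ lim f = ξ ∧ lim g = η => R.gpRay f g) h

lemma lt_gpB_exists {B : Type*} {lim : (ℕ → X) → B} {ξ η : B} {c : ℝ≥0∞}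
    (h : c < R.gpB lim ξ η) :
    ∃ f g, R.IsRay f ∧ R.IsRay g ∧ lim f = ξ ∧ lim g = η ∧ c < R.gpRay f g := by
  rw [gpB, lt_iSup_iff] at h
  obtain ⟨f, hf⟩ := h
  rw [lt_iSup_iff] at hf
  obtain ⟨g, hg⟩ := hf
  rw [lt_iSup_iff] at hg
  obtain ⟨⟨h1, h2, h3, h4⟩, h5⟩ := hg
  exact ⟨f, g, h1, h2, h3, h4, h5⟩

/-- If the boundary Gromov product is infinite, the two boundary points coincide. -/
lemma eq_of_gpB_top {B : Type*} {lim : (ℕ → X) → B} (hB : R.BoundaryOf lim)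
    {δ : ℝ} (hδ0 : 0 ≤ δ)
    (hδ : ∀ x y z : X, min (R.gp x z) (R.gp z y) - δ ≤ R.gp x y)
    {ξ η : B} (h : R.gpB lim ξ η = ⊤) : ξ = η := by
  obtain ⟨f₀, hf₀, hlf₀⟩ := hB.1 ξ
  obtain ⟨g₀, hg₀, hlg₀⟩ := hB.1 η
  have htop : R.gpRay f₀ g₀ = ⊤ := by
    apply gpRay_eq_top_of_forall
    intro s
    set t : ℝ := max s 0 + 4 * δ with htdef
    have ht0 : 0 ≤ t := by positivity
    have hlt : ENNReal.ofReal t < R.gpB lim ξ η := by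
      rw [h]; exact ENNReal.ofReal_lt_top
    obtain ⟨f', g', hf', hg', hlf', hlg', hgt⟩ := lt_gpB_exists hlt
    rw [gpRay, lt_iSup_iff] at hgt
    obtain ⟨i, hi⟩ := hgt
    have hti : t < R.gp (f' i) (g' i) :=
      (ENNReal.ofReal_lt_ofReal_iff_of_nonneg ht0).mp hi
    have hff' : R.gpRay f₀ f' = ⊤ :=
      (hB.2 f₀ f' hf₀ hf').mp (hlf₀.trans hlf'.symm)
    have hgg' : R.gpRay g₀ g' = ⊤ :=
      (hB.2 g₀ g' hg₀ hg').mp (hlg₀.trans hlg'.symm)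
    refine ⟨⌈t⌉₊, ?_⟩
    have hk := key2 hδ0 hδ hf₀ hf' hg₀ hg' hff' hgg' hti.le ⌈t⌉₊
    have hmin : min t ((⌈t⌉₊ : ℕ) : ℝ) = t := min_eq_left (Nat.le_ceil t)
    rw [hmin] at hk
    have hs : s ≤ max s 0 := le_max_left _ _
    linarith
  exact hlf₀.symm.trans (((hB.2 f₀ g₀ hf₀ hg₀).mpr htop).trans hlg₀)

end RootedGraph

end

open RootedGraph in
/-- Theorem 3.6: the hyperbolic boundary of an expansive hyperbolic graph
of bounded degree is a doubling metric space. -/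
theorem boundary_doubling {X B : Type*} [MetricSpace B] (R : RootedGraph X)
    (hexp : R.Expansive) (hhyp : R.Hyperbolic) (hbdd : R.BddDeg)
    (hne : ∀ x : X, (R.J 1 x).Nonempty)
    (lim : (ℕ → X) → B) (hB : R.BoundaryOf lim)
    (a c₁ c₂ : ℝ) (ha : 0 < a) (hc₁ : 0 < c₁) (hc₂ : 0 < c₂)
    (hθ : R.GromovLike lim a c₁ c₂) :
    ∃ ℓ : ℕ, ∀ (ξ : B) (r : ℝ), ∃ s : Finset B,
      s.card ≤ ℓ ∧ Metric.ball ξ r ⊆ ⋃ η ∈ s, Metric.ball η (r / 2) := by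
  classical
  obtain ⟨δ, hδ0, hδ⟩ := hhyp
  obtain ⟨D, hD⟩ := hbdd
  set L : ℝ := |Real.log (2 * c₂ / c₁)| / a with hLdef
  have hL0 : 0 ≤ L := by positivity
  set m : ℕ := ⌈4 * L + 10 * δ + 4⌉₊ with hmdef
  have haL : a * L = |Real.log (2 * c₂ / c₁)| := by
    rw [hLdef]; field_simp
  refine ⟨(D + 1) ^ m, ?_⟩
  intro ξ r
  rcases le_or_gt r 0 with hr0 | hr0
  · refine ⟨∅, by simp, ?_⟩
    rw [Metric.ball_eq_empty.mpr hr0]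
    exact Set.empty_subset _
  rcases lt_or_ge (2 * c₂) r with hbig | hsmall
  · -- large radius: a single ball suffices
    refine ⟨{ξ}, by simpa using Nat.one_le_pow m (D + 1) (by omega), ?_⟩
    intro η hη
    refine Set.mem_iUnion₂.mpr ⟨ξ, Finset.mem_singleton_self ξ, ?_⟩
    rw [Metric.mem_ball]
    by_cases hcase : η = ξ
    · rw [hcase, _root_.dist_self]; linarith
    · have h1 := (hθ η ξ hcase).2
      have h2 : Real.exp (-a * (R.gpB lim η ξ).toReal) ≤ 1 := by
        rw [Real.exp_le_one_iff]
        have := ENNReal.toReal_nonneg (a := R.gpB lim η ξ)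
        nlinarith
      nlinarith
  -- main case : 0 < r ≤ 2 c₂
  obtain ⟨f, hf, hlimf⟩ := hB.1 ξ
  set t : ℝ := Real.log (c₁ / r) / a with htdef
  have hat : a * t = Real.log (c₁ / r) := by rw [htdef]; field_simp
  set n' : ℕ := ⌈max t 0 + L + δ⌉₊ + 1 with hn'def
  have hn'ge : max t 0 + L + δ + 1 ≤ (n' : ℝ) := by
    rw [hn'def]; push_cast
    have := Nat.le_ceil (max t 0 + L + δ); linarith
  have hn'le : (n' : ℝ) ≤ max t 0 + L + δ + 2 := by
    rw [hn'def]; push_cast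
    have := Nat.ceil_lt_add_one (show (0:ℝ) ≤ max t 0 + L + δ by positivity)
    linarith
  have hnegt : -t ≤ L := by
    have h1 : Real.log (r / c₁) ≤ Real.log (2 * c₂ / c₁) :=
      Real.log_le_log (by positivity) (by gcongr)
    have h2 : Real.log (2 * c₂ / c₁) ≤ a * L := by
      rw [haL]; exact le_abs_self _
    have h3 : Real.log (r / c₁) = - Real.log (c₁ / r) := by
      rw [← Real.log_inv]; congr 1; field_simp
    have : a * (-t) ≤ a * L := by rw [mul_neg, hat]; linarith
    exact le_of_mul_le_mul_left this ha
  have hmaxt : max t 0 ≤ t + L := by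
    rcases le_total t 0 with h | h
    · rw [max_eq_right h]; linarith
    · rw [max_eq_left h]; linarith
  have htn : t + 1 ≤ (n' : ℝ) := by
    have := le_max_left t 0; linarith
  -- radius estimate
  have hrad : c₂ * Real.exp (-a * ((n' : ℝ) - δ)) < r / 2 := by
    have e1 : Real.log (2 * c₂ / r) = Real.log (2 * c₂ / c₁) + Real.log (c₁ / r) := by
      rw [← Real.log_mul (by positivity) (by positivity)]
      congr 1; field_simp
    have e2 : t + L < (n' : ℝ) - δ := by
      have := le_max_left t 0; linarith
    have e3 : a * (t + L) < a * ((n' : ℝ) - δ) := by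
      exact mul_lt_mul_of_pos_left e2 ha
    have e4 : Real.log (2 * c₂ / r) < a * ((n' : ℝ) - δ) := by
      have : Real.log (2 * c₂ / c₁) ≤ a * L := by rw [haL]; exact le_abs_self _
      rw [e1]; rw [mul_add] at e3; linarith
    have e5 : Real.exp (-a * ((n' : ℝ) - δ)) < r / (2 * c₂) := by
      have h6 : -a * ((n' : ℝ) - δ) < Real.log (r / (2 * c₂)) := by
        have h7 : Real.log (r / (2 * c₂)) = - Real.log (2 * c₂ / r) := by
          rw [← Real.log_inv]; congr 1; field_simp
        rw [h7]; linarith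
      calc Real.exp (-a * ((n' : ℝ) - δ)) < Real.exp (Real.log (r / (2 * c₂))) :=
            Real.exp_lt_exp.mpr h6
        _ = r / (2 * c₂) := Real.exp_log (by positivity)
    calc c₂ * Real.exp (-a * ((n' : ℝ) - δ)) < c₂ * (r / (2 * c₂)) :=
          mul_lt_mul_of_pos_left e5 hc₂
      _ = r / 2 := by field_simp
  -- the candidate vertices and boundary points
  obtain ⟨sv, hsv, hsvcard⟩ := exists_ball_finset hD (f n') m
  choose rayOf hrayOf hrayOf' using fun y : X => exists_ray_through hne y
  refine ⟨sv.image (fun y => lim (rayOf y)),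
    le_trans Finset.card_image_le hsvcard, ?_⟩
  intro η hη
  rw [Metric.mem_ball] at hη
  -- witness rays with large product
  have hwit : ∃ f' g', R.IsRay f' ∧ R.IsRay g' ∧ lim f' = ξ ∧ lim g' = η ∧
      ∃ i, t ≤ R.gp (f' i) (g' i) := by
    by_cases hξη : η = ξ
    · refine ⟨f, f, hf, hf, hlimf, by rw [hξη]; exact hlimf, ⌈max t 0⌉₊, ?_⟩
      rw [hf.gp_eq, min_self]
      exact le_trans (le_max_left t 0) (Nat.le_ceil _)
    rcases le_or_gt t 0 with ht0 | ht0
    · obtain ⟨g, hg, hlg⟩ := hB.1 η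
      exact ⟨f, g, hf, hg, hlimf, hlg, 0, le_trans ht0 (gp_nonneg _ _)⟩
    · have hne' : ξ ≠ η := fun h => hξη h.symm
      have hθ1 := (hθ ξ η hne').1
      have hdistr : dist ξ η < r := by rw [_root_.dist_comm]; exact hη
      have hτt : t < (R.gpB lim ξ η).toReal := by
        set τ := (R.gpB lim ξ η).toReal with hτdef
        have h1 : c₁ * Real.exp (-a * τ) < r := lt_of_le_of_lt hθ1 hdistr
        have h2 : Real.exp (-a * τ) < r / c₁ := by
          rw [lt_div_iff₀ hc₁]; linarith [mul_comm c₁ (Real.exp (-a * τ))]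
        have h3 : -a * τ < Real.log (r / c₁) :=
          (Real.lt_log_iff_exp_lt (by positivity)).mpr h2
        have h4 : Real.log (r / c₁) = - Real.log (c₁ / r) := by
          rw [← Real.log_inv]; congr 1; field_simp
        have h6 : a * t < a * τ := by rw [hat]; linarith
        exact lt_of_mul_lt_mul_left h6 ha.le
      have hnetop : R.gpB lim ξ η ≠ ⊤ := by
        intro htop
        rw [htop, ENNReal.toReal_top] at hτt
        linarith
      have hlt : ENNReal.ofReal t < R.gpB lim ξ η := by
        rw [← ENNReal.ofReal_toReal hnetop]
        exact (ENNReal.ofReal_lt_ofReal_iff (lt_trans ht0 hτt)).mpr hτt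
      obtain ⟨f', g', h1, h2, h3, h4, h5⟩ := lt_gpB_exists hlt
      rw [gpRay, lt_iSup_iff] at h5
      obtain ⟨i, hi⟩ := h5
      exact ⟨f', g', h1, h2, h3, h4, i,
        ((ENNReal.ofReal_lt_ofReal_iff_of_nonneg ht0.le).mp hi).le⟩
  obtain ⟨f', g', hf', hg', hlf', hlg', i, hti⟩ := hwit
  have hff' : R.gpRay f f' = ⊤ := (hB.2 f f' hf hf').mp (hlimf.trans hlf'.symm)
  have hgg' : R.gpRay g' g' = ⊤ := hg'.gpRay_self
  have hgp : t - 4 * δ ≤ R.gp (f n') (g' n') := by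
    have hk := key2 hδ0 hδ hf hf' hg' hg' hff' hgg' hti n'
    rw [min_eq_left (by linarith : t ≤ (n' : ℝ))] at hk
    exact hk
  -- the vertex y and its distance to f n'
  set y := g' n' with hydef
  have hlevy : R.level y = n' := hg'.level_eq n'
  have hgpd : R.gp (f n') y = ((n' : ℝ) + (n' : ℝ) - R.G.dist (f n') y) / 2 := by
    unfold RootedGraph.gp
    rw [hf.level_eq, hlevy]
  have hdre : (R.G.dist (f n') y : ℝ) ≤ 4 * L + 10 * δ + 4 := by
    have h1 : (R.G.dist (f n') y : ℝ) = 2 * (n' : ℝ) - 2 * R.gp (f n') y := by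
      rw [hgpd]; ring
    have h2 : (n' : ℝ) - t ≤ 2 * L + δ + 2 := by linarith
    rw [h1]; linarith
  have hdm : R.G.dist (f n') y ≤ m := by
    have : (R.G.dist (f n') y : ℝ) ≤ (m : ℝ) :=
      le_trans hdre (by rw [hmdef]; exact Nat.le_ceil _)
    exact_mod_cast this
  have hysv : y ∈ sv := hsv y hdm
  refine Set.mem_iUnion₂.mpr ⟨lim (rayOf y), Finset.mem_image_of_mem _ hysv, ?_⟩
  rw [Metric.mem_ball]
  by_cases hcase : η = lim (rayOf y)
  · rw [hcase, _root_.dist_self]; linarith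
  · have hray := hrayOf y
    have hyy : rayOf y n' = y := by rw [← hlevy]; exact hrayOf' y
    have hgpy : (n' : ℝ) - δ ≤ R.gp (g' n') (rayOf y n') := by
      rw [hyy, ← hydef, gp_self, hlevy]; push_cast; linarith
    have hle1 : ENNReal.ofReal ((n' : ℝ) - δ) ≤ R.gpRay g' (rayOf y) :=
      le_trans (ENNReal.ofReal_le_ofReal hgpy)
        (le_iSup (fun j => ENNReal.ofReal (R.gp (g' j) (rayOf y j))) n')
    have hle2 : ENNReal.ofReal ((n' : ℝ) - δ) ≤ R.gpB lim η (lim (rayOf y)) :=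
      le_trans hle1 (gpRay_le_gpB ⟨hg', hray, hlg', rfl⟩)
    have hnetop : R.gpB lim η (lim (rayOf y)) ≠ ⊤ := by
      intro htop
      exact hcase (eq_of_gpB_top hB hδ0 hδ htop)
    set τ' : ℝ := (R.gpB lim η (lim (rayOf y))).toReal with hτ'def
    have hτ : (n' : ℝ) - δ ≤ τ' :=
      (ENNReal.ofReal_le_iff_le_toReal hnetop).mp hle2
    have hd := (hθ η (lim (rayOf y)) hcase).2
    have hexp : Real.exp (-a * τ') ≤ Real.exp (-a * ((n' : ℝ) - δ)) := by
      apply Real.exp_le_exp.mpr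
      nlinarith
    calc dist η (lim (rayOf y)) ≤ c₂ * Real.exp (-a * τ') := hd
      _ ≤ c₂ * Real.exp (-a * ((n' : ℝ) - δ)) :=
          mul_le_mul_of_nonneg_left hexp hc₂.le
      _ < r / 2 := hrad
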